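/- Let R be a commutative ring, m a natural number, and f, g polynomials over R with natDegree f ≤ m and natDegree g ≤ m. For a natural number i with 1 ≤ i ≤ m, define the truncations F = ∑_{j=0}^{i−1} C(coeff f (m−j))·X^{i−1−j} and G = ∑_{j=0}^{i−1} C(coeff g (m−j))·X^{i−1−j}. Then natDegree (F·g − G·f) ≤ m − 1. -/
import Mathlib


open Polynomial

/-- The key lemma of Bézout's 1764 method for two equations of the same degree `m`:
multiplying `g` by the `i`-th 'head' polynomial of `f` and `f` by the `i`-th head of
`g` and taking the difference produces a polynomial of degree at most `m − 1`. -/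
theorem natDegree_bezout_row_le {R : Type*} [CommRing R] (m : ℕ) (f g : Polynomial R)
    (hf : f.natDegree ≤ m) (hg : g.natDegree ≤ m) (i : ℕ) (hi : 1 ≤ i) (him : i ≤ m) :
    ((∑ j ∈ Finset.range i, C (f.coeff (m - j)) * X ^ (i - 1 - j)) * g -
        (∑ j ∈ Finset.range i, C (g.coeff (m - j)) * X ^ (i - 1 - j)) * f).natDegree
      ≤ m - 1 := by
  rw [natDegree_le_iff_coeff_eq_zero]
  intro N hN
  have hNm : m ≤ N := by omega
  have hcoef : ∀ p q : Polynomial R,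
      ((∑ j ∈ Finset.range i, C (p.coeff (m - j)) * X ^ (i - 1 - j)) * q).coeff N
        = ∑ j ∈ Finset.range i, p.coeff (m - j) * q.coeff (N - (i - 1 - j)) := by
    intro p q
    rw [Finset.sum_mul, finset_sum_coeff]
    refine Finset.sum_congr rfl fun j hj => ?_
    rw [Finset.mem_range] at hj
    have h1 : i - 1 - j ≤ N := by omega
    rw [mul_right_comm, coeff_mul_X_pow', if_pos h1, coeff_C_mul]
  rw [coeff_sub, hcoef f g, hcoef g f, ← Finset.sum_sub_distrib]
  have hzero : ∀ j, j < i → m + i ≤ N + j →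
      f.coeff (m - j) * g.coeff (N - (i - 1 - j)) -
        g.coeff (m - j) * f.coeff (N - (i - 1 - j)) = 0 := by
    intro j hj hb
    have hb' : m < N - (i - 1 - j) := by omega
    rw [coeff_eq_zero_of_natDegree_lt (lt_of_le_of_lt hg hb'),
        coeff_eq_zero_of_natDegree_lt (lt_of_le_of_lt hf hb'), mul_zero, mul_zero, sub_zero]
  by_cases hbig : m + i ≤ N
  · exact Finset.sum_eq_zero fun j hj => hzero j (Finset.mem_range.mp hj) (by omega)
  · push_neg at hbig
    set d := m + i - 1 - N with hd
    have hdlt : d < i := by omega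
    have key : ∀ j ≤ d, N - (i - 1 - j) = m - (d - j) := by intro j hj; omega
    apply Finset.sum_involution (g := fun j _ => if j ≤ d then d - j else j)
    · intro j hj
      rw [Finset.mem_range] at hj
      by_cases hjd : j ≤ d
      · simp only [if_pos hjd]
        rw [key j hjd, key (d - j) (by omega), Nat.sub_sub_self hjd]
        ring
      · simp only [if_neg hjd]
        rw [hzero j hj (by omega)]
        simp
    · intro j hj hne
      by_cases hjd : j ≤ d
      · simp only [if_pos hjd]
        intro hfix
        apply hne
        rw [key j hjd, hfix]
        ring
      · rw [Finset.mem_range] at hj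
        exact (hne (hzero j hj (by omega))).elim
    · intro j hj
      rw [Finset.mem_range] at hj ⊢
      split <;> omega
    · intro j hj
      by_cases hjd : j ≤ d
      · simp [hjd, Nat.sub_le, Nat.sub_sub_self hjd]
      · simp [hjd]
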